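/- Let N ≥ 3 be an integer and let φ : [0,∞) → ℝ be twice continuously differentiable such that there exist constants 0 < φ₀ < φ₁ and C > 0 with, for all s ≥ 0: φ₀ ≤ φ(s) ≤ φ₁, s·|φ'(s)| ≤ C, φ(s) + 2s·φ'(s) ≥ φ₀, s²·|φ''(s)| ≤ C, 3φ'(s) + 2s·|φ''(s)| ≤ 0, and φ(s) + 5s·φ'(s) − 2s²·|φ''(s)| ≥ 0. Let Φ(s) = ∫₀^s φ(τ) dτ. Then for every fixed s ∈ ℝ, the function b ↦ J₂(s,b) := Φ((s² + b²)/2) − (1/N)·φ((s² + b²)/2)·b² is monotone increasing and convex on [0,∞). -/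

import Mathlib

open Set intervalIntegral

private lemma hdw_congr {f : ℝ → ℝ} {a b x : ℝ} {t : Set ℝ}
    (h : HasDerivWithinAt f a t x) (hab : a = b) : HasDerivWithinAt f b t x := hab ▸ h

/-- Lemma 6.1(ii): under conditions (φ1), (φ3), (φ4), for each fixed `s` the
function `b ↦ J₂(s,b) = Φ((s²+b²)/2) − (1/N)φ((s²+b²)/2)·b²` is monotone
increasing and convex on `[0,∞)`. -/
theorem J2_monotone_convex
    (N : ℕ) (hN : 3 ≤ N)
    (φ φ' φ'' : ℝ → ℝ) (φ₀ φ₁ C : ℝ)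
    (hφ₀ : 0 < φ₀) (hφ₀₁ : φ₀ < φ₁) (hC : 0 < C)
    (hderiv : ∀ s ∈ Set.Ici (0:ℝ), HasDerivWithinAt φ (φ' s) (Set.Ici 0) s)
    (hderiv2 : ∀ s ∈ Set.Ici (0:ℝ), HasDerivWithinAt φ' (φ'' s) (Set.Ici 0) s)
    (hderivcont : ContinuousOn φ'' (Set.Ici 0))
    (hbnd : ∀ s ∈ Set.Ici (0:ℝ), φ₀ ≤ φ s ∧ φ s ≤ φ₁)
    (hd1 : ∀ s ∈ Set.Ici (0:ℝ), s * |φ' s| ≤ C)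
    (hphi3 : ∀ s ∈ Set.Ici (0:ℝ), φ₀ ≤ φ s + 2 * s * φ' s)
    (hd2 : ∀ s ∈ Set.Ici (0:ℝ), s ^ 2 * |φ'' s| ≤ C)
    (hphi4a : ∀ s ∈ Set.Ici (0:ℝ), 3 * φ' s + 2 * s * |φ'' s| ≤ 0)
    (hphi4b : ∀ s ∈ Set.Ici (0:ℝ), 0 ≤ φ s + 5 * s * φ' s - 2 * s ^ 2 * |φ'' s|)
    (Φ : ℝ → ℝ) (hΦ : ∀ s : ℝ, Φ s = ∫ τ in (0:ℝ)..s, φ τ) :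
    ∀ s : ℝ,
      MonotoneOn (fun b : ℝ =>
        Φ ((s ^ 2 + b ^ 2) / 2) - (1 / (N : ℝ)) * φ ((s ^ 2 + b ^ 2) / 2) * b ^ 2)
        (Set.Ici 0) ∧
      ConvexOn ℝ (Set.Ici 0) (fun b : ℝ =>
        Φ ((s ^ 2 + b ^ 2) / 2) - (1 / (N : ℝ)) * φ ((s ^ 2 + b ^ 2) / 2) * b ^ 2) := by
  intro s
  set n : ℝ := (N : ℝ) with hn
  have hn3 : (3:ℝ) ≤ n := by rw [hn]; exact_mod_cast hN
  have hn0 : (0:ℝ) < n := by linarith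
  -- φ' is nonpositive on [0,∞)
  have hφ'le : ∀ x ∈ Set.Ici (0:ℝ), φ' x ≤ 0 := by
    intro x hx
    have h1 := hphi4a x hx
    have h2 : 0 ≤ x * |φ'' x| := mul_nonneg hx (abs_nonneg _)
    linarith
  -- continuity of φ
  have hφcont : ContinuousOn φ (Set.Ici 0) := fun x hx => (hderiv x hx).continuousWithinAt
  -- derivative of Φ
  have hΦeq : Φ = fun u => ∫ τ in (0:ℝ)..u, φ τ := funext hΦ
  have hΦd : ∀ x ∈ Set.Ici (0:ℝ), HasDerivWithinAt Φ (φ x) (Set.Ici 0) x := by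
    intro x hx
    have hx0 : (0:ℝ) ≤ x := hx
    have hint : IntervalIntegrable φ MeasureTheory.volume 0 x := by
      apply ContinuousOn.intervalIntegrable
      rw [Set.uIcc_of_le hx0]
      exact hφcont.mono (Set.Icc_subset_Ici_self)
    rw [hΦeq]
    rcases eq_or_lt_of_le hx0 with h0 | h0
    · subst h0
      exact intervalIntegral.integral_hasDerivWithinAt_right hint
        ((hφcont.mono Set.Ioi_subset_Ici_self).stronglyMeasurableAtFilter_nhdsWithin
          measurableSet_Ioi 0)
        ((hφcont 0 hx).mono Set.Ioi_subset_Ici_self)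
    · exact (intervalIntegral.integral_hasDerivAt_right hint
        ((hφcont.mono Set.Ioi_subset_Ici_self).stronglyMeasurableAtFilter isOpen_Ioi x h0)
        ((hφcont x hx).continuousAt (Ici_mem_nhds h0))).hasDerivWithinAt
  -- the inner function u
  set u : ℝ → ℝ := fun b => (s ^ 2 + b ^ 2) / 2 with hu_def
  have hu0 : ∀ b : ℝ, u b ∈ Set.Ici (0:ℝ) := by
    intro b; simp only [hu_def, Set.mem_Ici]; positivity
  have hmaps : Set.MapsTo u (Set.Ici 0) (Set.Ici 0) := fun b _ => hu0 b
  have hu : ∀ b : ℝ, HasDerivWithinAt u b (Set.Ici 0) b := by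
    intro b
    have h : HasDerivAt (fun b : ℝ => (s ^ 2 + b ^ 2) / 2) ((0 + 2 * b ^ 1) / 2) b := by
      exact (((hasDerivAt_const b (s^2)).add (hasDerivAt_pow 2 b)).div_const 2)
    have h' : HasDerivAt u b b := by
      have : (0 + 2 * b ^ 1) / 2 = b := by ring
      rw [this] at h; exact h
    exact h'.hasDerivWithinAt
  -- derivatives of compositions
  have hφu : ∀ b : ℝ, HasDerivWithinAt (fun b => φ (u b)) (φ' (u b) * b) (Set.Ici 0) b :=
    fun b => HasDerivWithinAt.comp b (hderiv (u b) (hu0 b)) (hu b) hmaps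
  have hφ'u : ∀ b : ℝ, HasDerivWithinAt (fun b => φ' (u b)) (φ'' (u b) * b) (Set.Ici 0) b :=
    fun b => HasDerivWithinAt.comp b (hderiv2 (u b) (hu0 b)) (hu b) hmaps
  have hΦu : ∀ b : ℝ, HasDerivWithinAt (fun b => Φ (u b)) (φ (u b) * b) (Set.Ici 0) b :=
    fun b => HasDerivWithinAt.comp b (hΦd (u b) (hu0 b)) (hu b) hmaps
  -- first and second derivative candidates
  set J1 : ℝ → ℝ := fun b => b * ((1 - 2 / n) * φ (u b) - 1 / n * φ' (u b) * b ^ 2) with hJ1_def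
  set J2 : ℝ → ℝ := fun b =>
    (1 - 2 / n) * φ (u b) + (1 - 5 / n) * φ' (u b) * b ^ 2 - 1 / n * φ'' (u b) * (b ^ 2) ^ 2
    with hJ2_def
  have hb2 : ∀ b : ℝ, HasDerivWithinAt (fun b : ℝ => b ^ 2) (2 * b ^ 1) (Set.Ici 0) b := by
    intro b
    have := (hasDerivAt_pow 2 b).hasDerivWithinAt (s := Set.Ici 0)
    simpa using this
  -- derivative of the target function
  have hDJ : ∀ b : ℝ, HasDerivWithinAt
      (fun b : ℝ => Φ ((s ^ 2 + b ^ 2) / 2) - 1 / n * φ ((s ^ 2 + b ^ 2) / 2) * b ^ 2)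
      (J1 b) (Set.Ici 0) b := by
    intro b
    have h := (hΦu b).sub (((hφu b).const_mul (1 / n)).mul (hb2 b))
    refine hdw_congr h ?_
    simp only [hJ1_def]; ring
  -- derivative of J1
  have hDJ1 : ∀ b : ℝ, HasDerivWithinAt J1 (J2 b) (Set.Ici 0) b := by
    intro b
    have hg := ((hφu b).const_mul (1 - 2 / n)).sub
      (((hφ'u b).const_mul (1 / n)).mul (hb2 b))
    have h := (hasDerivAt_id' b).hasDerivWithinAt.mul hg
    refine hdw_congr h ?_
    simp only [hJ2_def, Pi.sub_apply, Pi.mul_apply]; ring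
  -- nonnegativity of J1 on [0,∞)
  have hJ1nn : ∀ b ∈ Set.Ici (0:ℝ), 0 ≤ J1 b := by
    intro b hb
    have hb0 : (0:ℝ) ≤ b := hb
    have hA : φ₀ ≤ φ (u b) := (hbnd (u b) (hu0 b)).1
    have hB : φ' (u b) ≤ 0 := hφ'le (u b) (hu0 b)
    have h2n : 2 / n ≤ 1 := by rw [div_le_one hn0]; linarith
    have h1 : 0 ≤ (1 - 2 / n) * φ (u b) := mul_nonneg (by linarith) (by linarith)
    have h2 : 0 ≤ 1 / n * (-φ' (u b)) * b ^ 2 :=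
      mul_nonneg (mul_nonneg (by positivity) (by linarith)) (sq_nonneg b)
    simp only [hJ1_def]
    have : 0 ≤ (1 - 2 / n) * φ (u b) - 1 / n * φ' (u b) * b ^ 2 := by nlinarith
    exact mul_nonneg hb0 this
  -- nonnegativity of J2 on [0,∞)
  have hJ2nn : ∀ b ∈ Set.Ici (0:ℝ), 0 ≤ J2 b := by
    intro b hb
    set x : ℝ := u b with hx_def
    have hx : (0:ℝ) ≤ x := hu0 b
    have hxIci : x ∈ Set.Ici (0:ℝ) := hx
    set t : ℝ := b ^ 2 with ht_def
    have ht : (0:ℝ) ≤ t := sq_nonneg b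
    have htx : t ≤ 2 * x := by
      simp only [ht_def, hx_def, hu_def]; nlinarith [sq_nonneg s]
    set A := φ x
    set B := φ' x
    set E := |φ'' x| with hE_def
    have hA : φ₀ ≤ A := (hbnd x hxIci).1
    have hB : B ≤ 0 := hφ'le x hxIci
    have hE0 : (0:ℝ) ≤ E := abs_nonneg _
    have hDE : φ'' x ≤ E := le_abs_self _
    have hc1 : 0 ≤ A + 5 * x * B - 2 * x ^ 2 * E := hphi4b x hxIci
    have hc2 : 3 * B + 2 * x * E ≤ 0 := hphi4a x hxIci
    have hc3 : φ₀ ≤ A + 2 * x * B := hphi3 x hxIci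
    -- x * hc2
    have hc2x : 3 * (x * B) + 2 * (x ^ 2 * E) ≤ 0 := by
      nlinarith [mul_nonneg hx (neg_nonneg.mpr hc2)]
    have hx2E : (0:ℝ) ≤ x ^ 2 * E := by positivity
    have hA4E : 4 * (x ^ 2 * E) ≤ A := by linarith
    have hP : 0 ≤ (n - 3) * (A + 2 * x * B) :=
      mul_nonneg (by linarith) (by linarith)
    have p1 : 0 ≤ (n - 3) * ((-B) * (2 * x - t)) :=
      mul_nonneg (by linarith) (mul_nonneg (by linarith) (by linarith))
    have p2 : 0 ≤ (-B) * t := mul_nonneg (by linarith) ht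
    have p3 : 0 ≤ 4 * (x ^ 2 * E) - E * t ^ 2 := by
      nlinarith [mul_nonneg hE0 (mul_nonneg (sub_nonneg.2 htx) (show (0:ℝ) ≤ 2 * x + t by linarith))]
    have hmainE : 0 ≤ (n - 2) * A + (n - 5) * B * t - E * t ^ 2 := by linarith [p1, p2, p3, hP, hA4E]
    have hDt : φ'' x * t ^ 2 ≤ E * t ^ 2 := mul_le_mul_of_nonneg_right hDE (sq_nonneg t)
    have hmain : 0 ≤ (n - 2) * A + (n - 5) * B * t - φ'' x * t ^ 2 := by linarith
    have hexpr : (1 - 2 / n) * A + (1 - 5 / n) * B * t - 1 / n * φ'' x * t ^ 2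
        = ((n - 2) * A + (n - 5) * B * t - φ'' x * t ^ 2) / n := by
      field_simp
    simp only [hJ2_def]
    calc (0:ℝ) ≤ ((n - 2) * A + (n - 5) * B * t - φ'' x * t ^ 2) / n :=
          div_nonneg hmain hn0.le
      _ = (1 - 2 / n) * A + (1 - 5 / n) * B * t - 1 / n * φ'' x * t ^ 2 := hexpr.symm
  -- continuity
  have hcontF : ContinuousOn
      (fun b : ℝ => Φ ((s ^ 2 + b ^ 2) / 2) - 1 / n * φ ((s ^ 2 + b ^ 2) / 2) * b ^ 2)
      (Set.Ici 0) := fun b hb => (hDJ b).continuousWithinAt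
  have hcontJ1 : ContinuousOn J1 (Set.Ici 0) := fun b hb => (hDJ1 b).continuousWithinAt
  constructor
  · exact monotoneOn_of_hasDerivWithinAt_nonneg (convex_Ici 0) hcontF
      (fun x hx => (hDJ x).mono interior_subset)
      (fun x hx => hJ1nn x (interior_subset hx))
  · have hJ1mono : MonotoneOn J1 (Set.Ici 0) :=
      monotoneOn_of_hasDerivWithinAt_nonneg (convex_Ici 0) hcontJ1
        (fun x hx => (hDJ1 x).mono interior_subset)
        (fun x hx => hJ2nn x (interior_subset hx))
    have hdiff : DifferentiableOn ℝ
        (fun b : ℝ => Φ ((s ^ 2 + b ^ 2) / 2) - 1 / n * φ ((s ^ 2 + b ^ 2) / 2) * b ^ 2)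
        (interior (Set.Ici 0)) :=
      fun x hx => ((hDJ x).mono interior_subset).differentiableWithinAt
    have hderivF : ∀ x ∈ interior (Set.Ici (0:ℝ)),
        deriv (fun b : ℝ => Φ ((s ^ 2 + b ^ 2) / 2) - 1 / n * φ ((s ^ 2 + b ^ 2) / 2) * b ^ 2) x
          = J1 x := by
      intro x hx
      rw [interior_Ici] at hx
      exact ((hDJ x).hasDerivAt (Ici_mem_nhds hx)).deriv
    refine MonotoneOn.convexOn_of_deriv (convex_Ici 0) hcontF hdiff ?_
    intro a ha b hb hab
    rw [hderivF a ha, hderivF b hb]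
    exact hJ1mono (interior_subset ha) (interior_subset hb) hab
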